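/- Let {X_n} be Banach spaces, U a free ultrafilter on ℕ, and T_n ∈ L(X_n) with sup_n ‖T_n‖ < ∞. Then the numerical radius of the ultraproduct operator satisfies v((T_n)_U) ≥ lim_U v(T_n). -/

import Mathlib

open Filter Metric ENNReal

noncomputable def nradius {E : Type*} [SeminormedAddCommGroup E] [NormedSpace ℝ E]
    (T : E →L[ℝ] E) : ℝ :=
  sSup {r : ℝ | ∃ (x : E) (f : E →L[ℝ] ℝ), ‖x‖ = 1 ∧ ‖f‖ = 1 ∧ f x = 1 ∧ r = |f (T x)|}

noncomputable def nindex (E : Type*) [SeminormedAddCommGroup E] [NormedSpace ℝ E] : ℝ :=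
  sInf {r : ℝ | ∃ T : E →L[ℝ] E, ‖T‖ = 1 ∧ r = nradius T}

noncomputable def nullIdeal (X : ℕ → Type*) [∀ n, NormedAddCommGroup (X n)]
    [∀ n, NormedSpace ℝ (X n)] (U : Ultrafilter ℕ) : Submodule ℝ (lp X ∞) where
  carrier := {f | Tendsto (fun n => ‖f n‖) (U : Filter ℕ) (nhds 0)}
  zero_mem' := by
    simpa using (tendsto_const_nhds : Tendsto (fun _ : ℕ => (0 : ℝ)) (U : Filter ℕ) (nhds 0))
  add_mem' := by
    intro f g hf hg
    have h := hf.add hg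
    rw [add_zero] at h
    refine squeeze_zero (fun n => norm_nonneg _) (fun n => ?_) h
    simpa using norm_add_le (f n) (g n)
  smul_mem' := by
    intro c f hf
    have h := hf.const_mul ‖c‖
    rw [mul_zero] at h
    refine squeeze_zero (fun n => norm_nonneg _) (fun n => ?_) h
    simp [norm_smul]

section ulim

variable (U : Ultrafilter ℕ)

noncomputable def ulim (a : ℕ → ℝ) : ℝ :=
  letI := Classical.propDecidable
  if h : ∃ l, Tendsto a (U : Filter ℕ) (nhds l) then h.choose else 0

theorem ulim_eq {U : Ultrafilter ℕ} {a : ℕ → ℝ} {l : ℝ}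
    (h : Tendsto a (U : Filter ℕ) (nhds l)) : ulim U a = l := by
  have hex : ∃ l, Tendsto a (U : Filter ℕ) (nhds l) := ⟨l, h⟩
  rw [ulim, dif_pos hex]
  exact tendsto_nhds_unique hex.choose_spec h

theorem exists_ulim_of_bounded {U : Ultrafilter ℕ} {a : ℕ → ℝ} {C : ℝ}
    (h : ∀ n, |a n| ≤ C) : ∃ l, Tendsto a (U : Filter ℕ) (nhds l) := by
  have hmem : ∀ n, a n ∈ Set.Icc (-C) C := fun n => abs_le.mp (h n)
  have hle : (U.map a : Filter ℝ) ≤ Filter.principal (Set.Icc (-C) C) := by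
    rw [Filter.le_principal_iff]
    exact Filter.mem_map.mpr (Filter.Eventually.of_forall hmem)
  obtain ⟨l, _, hl⟩ := (isCompact_Icc (a := -C) (b := C)).ultrafilter_le_nhds (U.map a) hle
  exact ⟨l, hl⟩

theorem ulim_tendsto {U : Ultrafilter ℕ} {a : ℕ → ℝ}
    (h : ∃ l, Tendsto a (U : Filter ℕ) (nhds l)) :
    Tendsto a (U : Filter ℕ) (nhds (ulim U a)) := by
  rw [ulim, dif_pos h]; exact h.choose_spec

end ulim

section func

variable {X : ℕ → Type*} [∀ n, NormedAddCommGroup (X n)] [∀ n, NormedSpace ℝ (X n)]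
  (U : Ultrafilter ℕ) (fv : ∀ n, X n →L[ℝ] ℝ)

theorem bounded_fv (hfv : ∀ n, ‖fv n‖ ≤ 1) (g : lp X ∞) (n : ℕ) : |fv n (g n)| ≤ ‖g‖ := by
  calc |fv n (g n)| ≤ ‖fv n‖ * ‖g n‖ := (fv n).le_opNorm (g n)
    _ ≤ 1 * ‖g‖ := by
        exact mul_le_mul (hfv n) (lp.norm_apply_le_norm ENNReal.top_ne_zero g n)
          (norm_nonneg _) zero_le_one
    _ = ‖g‖ := one_mul _

theorem exists_lim_fv (hfv : ∀ n, ‖fv n‖ ≤ 1) (g : lp X ∞) :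
    ∃ l, Tendsto (fun n => fv n (g n)) (U : Filter ℕ) (nhds l) :=
  exists_ulim_of_bounded (bounded_fv fv hfv g)

noncomputable def Flin (hfv : ∀ n, ‖fv n‖ ≤ 1) : lp X ∞ →ₗ[ℝ] ℝ where
  toFun g := ulim U (fun n => fv n (g n))
  map_add' g h := by
    obtain ⟨l₁, h₁⟩ := exists_lim_fv U fv hfv g
    obtain ⟨l₂, h₂⟩ := exists_lim_fv U fv hfv h
    show ulim U (fun n => fv n ((g + h) n)) =
      ulim U (fun n => fv n (g n)) + ulim U (fun n => fv n (h n))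
    rw [ulim_eq h₁, ulim_eq h₂]
    refine ulim_eq (l := l₁ + l₂) ?_
    have : (fun n => fv n ((g + h) n)) = fun n => fv n (g n) + fv n (h n) := by
      funext n
      rw [lp.coeFn_add, Pi.add_apply, map_add]
    rw [this]
    exact h₁.add h₂
  map_smul' c g := by
    obtain ⟨l, h₁⟩ := exists_lim_fv U fv hfv g
    show ulim U (fun n => fv n ((c • g) n)) = c • ulim U (fun n => fv n (g n))
    rw [ulim_eq h₁, smul_eq_mul]
    refine ulim_eq (l := c * l) ?_
    have : (fun n => fv n ((c • g) n)) = fun n => c * fv n (g n) := by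
      funext n
      rw [lp.coeFn_smul, Pi.smul_apply, map_smul, smul_eq_mul]
    rw [this]
    exact h₁.const_mul c

theorem Flin_abs_le (hfv : ∀ n, ‖fv n‖ ≤ 1) (g : lp X ∞) : |Flin U fv hfv g| ≤ ‖g‖ := by
  obtain ⟨l, h₁⟩ := exists_lim_fv U fv hfv g
  have : Flin U fv hfv g = l := ulim_eq h₁
  rw [this]
  exact le_of_tendsto' h₁.abs (bounded_fv fv hfv g)

theorem Flin_null (hfv : ∀ n, ‖fv n‖ ≤ 1) (g : lp X ∞) (hg : g ∈ nullIdeal X U) : Flin U fv hfv g = 0 := by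
  refine ulim_eq ?_
  refine squeeze_zero_norm (fun n => ?_) hg
  calc ‖fv n (g n)‖ ≤ ‖fv n‖ * ‖g n‖ := (fv n).le_opNorm (g n)
    _ ≤ 1 * ‖g n‖ := mul_le_mul_of_nonneg_right (hfv n) (norm_nonneg _)
    _ = ‖g n‖ := one_mul _

noncomputable def Fq (hfv : ∀ n, ‖fv n‖ ≤ 1) : (lp X ∞ ⧸ nullIdeal X U) →L[ℝ] ℝ :=
  LinearMap.mkContinuous
    (Submodule.liftQ (nullIdeal X U) (Flin U fv hfv) (by intro g hg; exact LinearMap.mem_ker.mpr (Flin_null U fv hfv g hg)))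
    1 (by
      intro y
      obtain ⟨g, rfl⟩ := Submodule.Quotient.mk_surjective _ y
      rw [Submodule.liftQ_apply, one_mul]
      refine le_of_forall_pos_le_add fun δ hδ => ?_
      obtain ⟨m, hm, hmn⟩ := Submodule.Quotient.norm_mk_lt (Submodule.Quotient.mk g :
        lp X ∞ ⧸ nullIdeal X U) hδ
      have heq : Flin U fv hfv g = Flin U fv hfv m := by
        have hsub : g - m ∈ nullIdeal X U := (Submodule.Quotient.eq _).mp hm.symm
        have := Flin_null U fv hfv (g - m) hsub
        rw [map_sub] at this
        linarith [this]
      rw [Real.norm_eq_abs, heq]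
      exact (Flin_abs_le U fv hfv m).trans hmn.le)

theorem Fq_mk (hfv : ∀ n, ‖fv n‖ ≤ 1) (g : lp X ∞) :
    Fq U fv hfv (Submodule.Quotient.mk g) = ulim U (fun n => fv n (g n)) := rfl

theorem Fq_norm_le (hfv : ∀ n, ‖fv n‖ ≤ 1) : ‖Fq U fv hfv‖ ≤ 1 :=
  LinearMap.mkContinuous_norm_le _ zero_le_one _

end func

theorem nradius_bddAbove {E : Type*} [SeminormedAddCommGroup E] [NormedSpace ℝ E]
    (T : E →L[ℝ] E) :
    BddAbove {r : ℝ | ∃ (x : E) (f : E →L[ℝ] ℝ), ‖x‖ = 1 ∧ ‖f‖ = 1 ∧ f x = 1 ∧ r = |f (T x)|} := by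
  refine ⟨‖T‖, ?_⟩
  rintro r ⟨x, f, hx, hf, _, rfl⟩
  calc |f (T x)| ≤ ‖f‖ * ‖T x‖ := f.le_opNorm (T x)
    _ = ‖T x‖ := by rw [hf, one_mul]
    _ ≤ ‖T‖ * ‖x‖ := T.le_opNorm x
    _ = ‖T‖ := by rw [hx, mul_one]

theorem nradius_nonneg {E : Type*} [SeminormedAddCommGroup E] [NormedSpace ℝ E]
    (T : E →L[ℝ] E) : 0 ≤ nradius T := by
  rcases Set.eq_empty_or_nonempty
    {r : ℝ | ∃ (x : E) (f : E →L[ℝ] ℝ), ‖x‖ = 1 ∧ ‖f‖ = 1 ∧ f x = 1 ∧ r = |f (T x)|} with h | h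
  · rw [nradius, h, Real.sSup_empty]
  · obtain ⟨r, hr⟩ := h
    have h0 : 0 ≤ r := by
      obtain ⟨x, f, _, _, _, rfl⟩ := hr
      exact abs_nonneg _
    exact h0.trans (le_csSup (nradius_bddAbove T) hr)


theorem ultraproduct_nradius_ge
    (X : ℕ → Type*) [∀ n, NormedAddCommGroup (X n)] [∀ n, NormedSpace ℝ (X n)]
    [∀ n, CompleteSpace (X n)]
    (U : Ultrafilter ℕ) (hU : (U : Filter ℕ) ≤ Filter.cofinite)
    (T : ∀ n, X n →L[ℝ] X n) (M : ℝ) (hM : ∀ n, ‖T n‖ ≤ M)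
    (Tq : (lp X ∞ ⧸ nullIdeal X U) →L[ℝ] (lp X ∞ ⧸ nullIdeal X U))
    (hTq : ∀ g h : lp X ∞, (∀ n, h n = T n (g n)) →
      Tq (Submodule.Quotient.mk g) = Submodule.Quotient.mk h)
    (L : ℝ) (hL : Tendsto (fun n => nradius (T n)) (U : Filter ℕ) (nhds L)) :
    L ≤ nradius Tq := by
  have hM0 : 0 ≤ M := (norm_nonneg (T 0)).trans (hM 0)
  refine le_of_forall_pos_le_add fun ε hε => ?_
  rcases le_or_gt L ε with hLε | hLε
  · linarith [nradius_nonneg Tq]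
  -- main case : ε < L
  set P : ℕ → Prop := fun n => ∃ (x : X n) (f : X n →L[ℝ] ℝ),
    ‖x‖ = 1 ∧ ‖f‖ = 1 ∧ f x = 1 ∧ L - ε < |f (T n x)| with hP
  have hPU : ∀ᶠ n in (U : Filter ℕ), P n := by
    have h1 : ∀ᶠ n in (U : Filter ℕ), L - ε < nradius (T n) :=
      hL.eventually (eventually_gt_nhds (by linarith))
    refine h1.mono fun n hn => ?_
    have hne : {r : ℝ | ∃ (x : X n) (f : X n →L[ℝ] ℝ),
        ‖x‖ = 1 ∧ ‖f‖ = 1 ∧ f x = 1 ∧ r = |f (T n x)|}.Nonempty := by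
      by_contra hemp
      rw [Set.not_nonempty_iff_eq_empty] at hemp
      rw [nradius, hemp, Real.sSup_empty] at hn
      linarith
    obtain ⟨r, hrmem, hrgt⟩ := exists_lt_of_lt_csSup hne hn
    obtain ⟨x, f, hx, hf, hfx, rfl⟩ := hrmem
    exact ⟨x, f, hx, hf, hfx, hrgt⟩
  -- choose witnesses
  have hchoice : ∀ n, ∃ (x : X n) (f : X n →L[ℝ] ℝ), ‖x‖ ≤ 1 ∧ ‖f‖ ≤ 1 ∧
      (P n → (‖x‖ = 1 ∧ ‖f‖ = 1 ∧ f x = 1 ∧ L - ε < |f (T n x)|)) := by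
    intro n
    by_cases h : P n
    · obtain ⟨x, f, hx, hf, hfx, hgt⟩ := h
      exact ⟨x, f, hx.le, hf.le, fun _ => ⟨hx, hf, hfx, hgt⟩⟩
    · exact ⟨0, 0, by simp, by simp, fun hp => absurd hp h⟩
  choose xv fv hxv1 hfv1 hprop using hchoice
  -- the element g of lp X ∞
  have hgmem : Memℓp xv ∞ := memℓp_infty ⟨1, by rintro r ⟨n, rfl⟩; exact hxv1 n⟩
  set g : lp X ∞ := ⟨xv, hgmem⟩ with hgdef
  have hgcoe : ∀ n, g n = xv n := fun n => rfl
  have hgnorm : ‖g‖ ≤ 1 := lp.norm_le_of_forall_le zero_le_one hxv1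
  -- the image sequence
  have hTgmem : Memℓp (fun n => T n (xv n)) ∞ := by
    refine memℓp_infty ⟨M, ?_⟩
    rintro r ⟨n, rfl⟩
    calc ‖T n (xv n)‖ ≤ ‖T n‖ * ‖xv n‖ := (T n).le_opNorm _
      _ ≤ M * 1 := mul_le_mul (hM n) (hxv1 n) (norm_nonneg _) hM0
      _ = M := mul_one M
  set Tg : lp X ∞ := ⟨fun n => T n (xv n), hTgmem⟩ with hTgdef
  have hTqg : Tq (Submodule.Quotient.mk g) = Submodule.Quotient.mk Tg :=
    hTq g Tg fun n => rfl
  -- the functional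
  set F := Fq U fv hfv1 with hFdef
  have hFnorm_le : ‖F‖ ≤ 1 := Fq_norm_le U fv hfv1
  have hFg : F (Submodule.Quotient.mk g) = 1 := by
    rw [hFdef, Fq_mk]
    refine ulim_eq ?_
    refine Tendsto.congr' ?_ (tendsto_const_nhds : Tendsto (fun _ : ℕ => (1:ℝ)) _ _)
    exact hPU.mono fun n hn => ((hprop n hn).2.2.1).symm
  -- norm of mk g is 1
  have hmkg_le : ‖(Submodule.Quotient.mk g : lp X ∞ ⧸ nullIdeal X U)‖ ≤ 1 :=
    (Submodule.Quotient.norm_mk_le _ g).trans hgnorm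
  have hmkg_ge : 1 ≤ ‖(Submodule.Quotient.mk g : lp X ∞ ⧸ nullIdeal X U)‖ := by
    have h1 : |F (Submodule.Quotient.mk g)| ≤ ‖F‖ * ‖(Submodule.Quotient.mk g :
        lp X ∞ ⧸ nullIdeal X U)‖ := F.le_opNorm _
    rw [hFg, abs_one] at h1
    nlinarith [norm_nonneg (Submodule.Quotient.mk g : lp X ∞ ⧸ nullIdeal X U),
      norm_nonneg F]
  have hmkg : ‖(Submodule.Quotient.mk g : lp X ∞ ⧸ nullIdeal X U)‖ = 1 :=
    le_antisymm hmkg_le hmkg_ge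
  have hFnorm : ‖F‖ = 1 := by
    refine le_antisymm hFnorm_le ?_
    have h1 : |F (Submodule.Quotient.mk g)| ≤ ‖F‖ * ‖(Submodule.Quotient.mk g :
        lp X ∞ ⧸ nullIdeal X U)‖ := F.le_opNorm _
    rw [hFg, abs_one, hmkg, mul_one] at h1
    exact h1
  -- the value on Tq (mk g)
  have hlim : Tendsto (fun n => fv n (Tg n)) (U : Filter ℕ)
      (nhds (ulim U (fun n => fv n (Tg n)))) := by
    refine ulim_tendsto (exists_ulim_of_bounded (C := M) fun n => ?_)
    calc |fv n (Tg n)| ≤ ‖fv n‖ * ‖Tg n‖ := (fv n).le_opNorm _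
      _ ≤ 1 * M := by
          refine mul_le_mul (hfv1 n) ?_ (norm_nonneg _) zero_le_one
          calc ‖Tg n‖ = ‖T n (xv n)‖ := rfl
            _ ≤ ‖T n‖ * ‖xv n‖ := (T n).le_opNorm _
            _ ≤ M * 1 := mul_le_mul (hM n) (hxv1 n) (norm_nonneg _) hM0
            _ = M := mul_one M
      _ = M := one_mul M
  have hFTg : F (Tq (Submodule.Quotient.mk g)) = ulim U (fun n => fv n (Tg n)) := by
    rw [hTqg, hFdef, Fq_mk]
  have hval : L - ε ≤ |F (Tq (Submodule.Quotient.mk g))| := by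
    rw [hFTg]
    refine ge_of_tendsto hlim.abs ?_
    refine hPU.mono fun n hn => ?_
    have := (hprop n hn).2.2.2
    have hTgn : Tg n = T n (xv n) := rfl
    rw [hTgn]
    exact this.le
  -- conclude
  have hmem : |F (Tq (Submodule.Quotient.mk g))| ∈
      {r : ℝ | ∃ (x : lp X ∞ ⧸ nullIdeal X U) (f : (lp X ∞ ⧸ nullIdeal X U) →L[ℝ] ℝ),
        ‖x‖ = 1 ∧ ‖f‖ = 1 ∧ f x = 1 ∧ r = |f (Tq x)|} :=
    ⟨Submodule.Quotient.mk g, F, hmkg, hFnorm, hFg, rfl⟩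
  have := (hval.trans (le_csSup (nradius_bddAbove Tq) hmem))
  rw [nradius]
  linarith
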